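/- The set of 4×4 complex orthogonal permutative matrices is not closed under matrix multiplication. -/

import Mathlib

open Matrix

/-- A matrix is permutative if every row is a permutation of every other row. -/
def Permutative {n : ℕ} {R : Type*} (A : Matrix (Fin n) (Fin n) R) : Prop :=
  ∀ i j : Fin n, ∃ σ : Equiv.Perm (Fin n), ∀ k, A j k = A i (σ k)

/-- Orthogonal permutative matrices of order 4 over `ℂ`. -/
def OPM4 : Set (Matrix (Fin 4) (Fin 4) ℂ) :=
  {A | Aᵀ * A = 1 ∧ Permutative A}

noncomputable def vrow : Fin 4 → ℂ := ![-2/5, 1/5, 2/5, 4/5]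

noncomputable def Amat : Matrix (Fin 4) (Fin 4) ℂ :=
  !![-2/5, 1/5, 2/5, 4/5;
      1/5, 2/5, 4/5, -2/5;
      2/5, 4/5, -2/5, 1/5;
      4/5, -2/5, 1/5, 2/5]

noncomputable def Bmat : Matrix (Fin 4) (Fin 4) ℂ :=
  !![-2/5, 1/5, 2/5, 4/5;
      1/5, 2/5, 4/5, -2/5;
      4/5, -2/5, 1/5, 2/5;
      2/5, 4/5, -2/5, 1/5]

def tfun : Fin 4 → Fin 4 := ![0, 1, 3, 2]

lemma Amat_apply (i k : Fin 4) : Amat i k = vrow (i + k) := by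
  fin_cases i <;> fin_cases k <;> rfl

lemma Bmat_apply (i k : Fin 4) : Bmat i k = vrow (tfun i + k) := by
  fin_cases i <;> fin_cases k <;> rfl

lemma Amat_perm : Permutative Amat := by
  intro i j
  refine ⟨Equiv.addRight (j - i), fun k => ?_⟩
  rw [Amat_apply, Amat_apply, Equiv.coe_addRight]
  congr 1
  rw [add_left_comm, add_sub_cancel, add_comm]

lemma Bmat_perm : Permutative Bmat := by
  intro i j
  refine ⟨Equiv.addRight (tfun j - tfun i), fun k => ?_⟩
  rw [Bmat_apply, Bmat_apply, Equiv.coe_addRight]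
  congr 1
  rw [add_left_comm, add_sub_cancel, add_comm]

lemma Amat_orth : Amatᵀ * Amat = 1 := by
  ext i j
  simp only [Matrix.mul_apply, Matrix.transpose_apply, Fin.sum_univ_four]
  fin_cases i <;> fin_cases j <;>
    norm_num [Amat, Matrix.one_apply, Fin.ext_iff, Matrix.cons_val_two, Matrix.cons_val_three]

lemma Bmat_orth : Bmatᵀ * Bmat = 1 := by
  ext i j
  simp only [Matrix.mul_apply, Matrix.transpose_apply, Fin.sum_univ_four]
  fin_cases i <;> fin_cases j <;>
    norm_num [Bmat, Matrix.one_apply, Fin.ext_iff, Matrix.cons_val_two, Matrix.cons_val_three]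

theorem OPM4_not_closed_under_mul :
    ∃ A ∈ OPM4, ∃ B ∈ OPM4, A * B ∉ OPM4 := by
  refine ⟨Amat, ⟨Amat_orth, Amat_perm⟩, Bmat, ⟨Bmat_orth, Bmat_perm⟩, ?_⟩
  rintro ⟨-, hperm⟩
  obtain ⟨σ, hσ⟩ := hperm 0 1
  have h1 : (Amat * Bmat) 1 1 = -11/25 := by
    simp [Amat, Bmat, Matrix.mul_apply, Fin.sum_univ_four]
    norm_num
  have h0 : ∀ m : Fin 4, (Amat * Bmat) 0 m ≠ -11/25 := by
    intro m
    fin_cases m <;>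
      · simp [Amat, Bmat, Matrix.mul_apply, Fin.sum_univ_four]
        intro h
        norm_num at h
  exact h0 (σ 1) (h1 ▸ (hσ 1).symm)
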